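/- arXiv:2312.15876 — 3 statements merged into one kernel-verified Lean document; each statement's English description precedes it below -/
import Mathlib

section
/- Fix constants c_1, c_2 > 0, and for ℓ ∈ ℕ_0^* and η' ∈ J̃_1, η'' ∈ J̃_2 with η' + η'' = η, set R_{ℓ,δ}(η',η'') = p_{ℓ,δ}(η',η'') + R_0(c_1 ℓ_* δ, (c_2+4) δ^{1/2}). Then there exist constants c_1', c_2' > 0, depending only on c_1, c_2 and independent of a, δ, ℓ, and the η-parameters, such that for every a ∈ ℝ, every ℓ ∈ ℕ_0^* with 0 ≤ ℓ ≤ (π/8) δ^{-1/2} − 1, and all η', η_0' ∈ J̃_1 and η'', η_0'' ∈ J̃_2 with η' + η'' = η_0' + η_0'' = η, one has 𝓔̃_a(η',η'') ∩ R_{ℓ,δ}(η_0',η_0'') ⊆ ℛ_{a δ^{1/2}} R(p_{ℓ,δ}(η',η''); c_1' ℓ_* δ, c_2' δ^{1/2}). -/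
open Set Pointwise

noncomputable def GammaD (δ μ : ℝ) : Set ℂ :=
  {ξ : ℂ | ξ ≠ 0 ∧ μ * Real.sqrt δ ≤ ξ.arg ∧ ξ.arg < (μ + 1) * Real.sqrt δ}

def calND (δ : ℝ) : Set ℤ :=
  {μ : ℤ | |(μ : ℝ)| ≤ Real.pi / 8 * (Real.sqrt δ)⁻¹ - 1}

noncomputable def uSetD (δ μ : ℝ) (J : Set ℝ) : Set (ℂ × ℝ) :=
  {p : ℂ × ℝ | |p.2 - ‖p.1‖| ≤ δ ∧ p.1 ∈ GammaD δ μ ∧ ‖p.1‖ ∈ J}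

noncomputable def rot (σ : ℝ) : ℂ → ℂ := fun z => Complex.exp (σ * Complex.I) * z

noncomputable def pPt (δ ℓ η' η'' : ℝ) : ℂ :=
  ⟨(η' + η'') * Real.cos (ℓ * Real.sqrt δ), (η' - η'') * Real.sin (ℓ * Real.sqrt δ)⟩

def rect (p : ℂ) (a b : ℝ) : Set ℂ :=
  {z : ℂ | |z.re - p.re| ≤ a ∧ |z.im - p.im| ≤ b}

noncomputable def curveE (η' η'' : ℝ) : Set ℂ :=
  if η' = η'' then {ξ : ℂ | ξ.im = 0 ∧ 1 ≤ ξ.re ∧ ξ.re ≤ η' + η''}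
  else {ξ : ℂ | ξ.re ^ 2 / (η' + η'') ^ 2 + ξ.im ^ 2 / (η' - η'') ^ 2 = 1 ∧
        1 ≤ ξ.re ∧ ξ.re ≤ η' + η'' ∧ (η'' ≤ η' → 0 ≤ ξ.im) ∧ (η' ≤ η'' → ξ.im ≤ 0)}

noncomputable def tildeE (η' η'' : ℝ) : Set ℂ :=
  curveE η' η'' ∪ {ξ : ℂ | ξ.im = 0 ∧ η' + η'' ≤ ξ.re ∧ ξ.re ≤ 5}

private lemma sqApprox {x p e M : ℝ} (h1 : |x - p| ≤ e) (hp : |p| ≤ M) :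
    |x^2 - p^2| ≤ e * (e + 2*M) := by
  have h2 : |x + p| ≤ e + 2*M := by
    have h3 : x + p = (x - p) + 2*p := by ring
    rw [h3]
    calc |(x - p) + 2*p| ≤ |x - p| + |2*p| := abs_add_le _ _
      _ ≤ e + 2*M := by rw [abs_mul, abs_two]; linarith
  have h4 : x^2 - p^2 = (x - p) * (x + p) := by ring
  rw [h4, abs_mul]
  exact mul_le_mul h1 h2 (abs_nonneg _) ((abs_nonneg _).trans h1)

private lemma sLemma1 {s : ℝ} (h0 : 0 < s) (h : s^2 ≤ 1/1000000) : s ≤ 1/1000 := by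
  nlinarith

private lemma sLemma2 {s : ℝ} (h0 : 0 < s) (h3 : s ≤ 1/1000) : s^2 ≤ 0.001*s := by
  nlinarith

private lemma cosLB {θ : ℝ} (h0 : 0 ≤ θ) (h4 : θ ≤ 0.4) : 0.9 ≤ Real.cos θ := by
  nlinarith [Real.one_sub_sq_div_two_le_cos (x := θ)]

private lemma sinLB {θ : ℝ} (h0 : 0 ≤ θ) (h4 : θ ≤ 0.4) : 0.9*θ ≤ Real.sin θ := by
  rcases eq_or_lt_of_le h0 with h | h
  · simp [← h]
  · nlinarith [Real.sin_gt_sub_cube h,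
      mul_nonneg (mul_nonneg h0 (show (0:ℝ) ≤ 0.4 - θ by linarith))
        (show (0:ℝ) ≤ 0.4 + θ by linarith)]

private lemma polyLemma {c₁ c₂ : ℝ} (hc₁ : 0 < c₁) (hc₂ : 0 < c₂) :
    0.0004*c₁^2 + 8.2*c₁ + 2*(c₂+4)^2 + 2.2*(c₂+4) + 2 ≤ 2*(c₁+c₂+10)^2 := by
  nlinarith [mul_pos hc₁ hc₂, sq_nonneg c₁, sq_nonneg c₂]

private lemma keyArith {c₁ c₂ C L s : ℝ}
    (t1 : 0 ≤ c₁^2*(L*s^2)*(0.0004 - L*s^2))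
    (t2 : 0 ≤ (c₂+4)^2*s^2*(2*L - 1))
    (t3 : 0 ≤ (L*s^2)*(0.0004 - L*s^2))
    (t4 : 0 ≤ (L*s^2)*(0.4 - L*s))
    (t5 : 0 ≤ (C - (0.0004*c₁^2 + 8.2*c₁ + 2*(c₂+4)^2 + 2.2*(c₂+4) + 2))*(L*s^2))
    (hm : 0 ≤ L*s^2) :
    (c₁*L*s^2)*((c₁*L*s^2) + 2*4.1) + ((c₂+4)*s)*((c₂+4)*s + 2*(1.1*(L*s)))
      + ((2.1*s)*(L*s))*((2.1*s)*(L*s) + 2*(1.1*(L*s))) ≤ C*(L*s^2) := by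
  nlinarith [t1, t2, t3, t4, t5, hm]

private lemma divBound1 {W L s C : ℝ} (hW : 0 ≤ W)
    (h : W*(0.9*(L*s)) ≤ 0.42*(C*(L*s^2)))
    (hL : 0 < L) (hs : 0 < s) (hC : 0 < C) : W ≤ 0.47*(C*s) := by
  nlinarith [mul_pos hL hs, mul_pos (mul_pos hC (mul_pos hL hs)) hs]

private lemma divBound2 {L s C sθ : ℝ}
    (h : 2.4*sθ^2 ≤ C*(L*s^2)) (h13 : (0.9*(L*s))^2 ≤ sθ^2)
    (hL : 0 < L) (hs : 0 < s) : L ≤ 0.52*C := by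
  nlinarith [mul_pos hL (mul_pos hs hs), mul_pos (mul_pos hL hL) (mul_pos hs hs)]

private lemma sqrtBound {W C s : ℝ} (hW : 0 ≤ W) (h : W^2 ≤ 0.26*(C*s^2))
    (hC : 200 ≤ C) (hs : 0 < s) : W ≤ 4*C*s := by
  nlinarith [mul_nonneg (show (0:ℝ) ≤ C - 200 by linarith)
      (mul_nonneg (show (0:ℝ) ≤ 16*C by linarith) (sq_nonneg s)),
    mul_nonneg (show (0:ℝ) ≤ C by linarith) (sq_nonneg s),
    mul_pos (show (0:ℝ) < C by linarith) hs]

set_option maxHeartbeats 4000000 in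
theorem statement13 :
    ∀ c₁ c₂ : ℝ, 0 < c₁ → 0 < c₂ →
    ∃ c₁' c₂' : ℝ, 0 < c₁' ∧ 0 < c₂' ∧
      ∀ δ : ℝ, 0 < δ → δ < 1 / 1000000 →
      ∀ α₁ β₁ α₂ β₂ : ℝ,
        1 ≤ α₁ → α₁ ≤ β₁ → β₁ ≤ 2 → β₁ - α₁ ≤ Real.sqrt δ →
        1 ≤ α₂ → α₂ ≤ β₂ → β₂ ≤ 2 → β₂ - α₂ ≤ Real.sqrt δ →
      ∀ a : ℝ,
      ∀ k : ℕ, (k : ℝ) / 2 ≤ Real.pi / 8 * (Real.sqrt δ)⁻¹ - 1 →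
      ∀ η' ∈ Icc (α₁ - δ) (β₁ + δ), ∀ η₀' ∈ Icc (α₁ - δ) (β₁ + δ),
      ∀ η'' ∈ Icc (α₂ - δ) (β₂ + δ), ∀ η₀'' ∈ Icc (α₂ - δ) (β₂ + δ),
        η' + η'' = η₀' + η₀'' →
        (rot (a * Real.sqrt δ) '' tildeE η' η'') ∩
            rect (pPt δ ((k : ℝ) / 2) η₀' η₀'')
              (c₁ * max ((k : ℝ) / 2) (1 / 2) * δ) ((c₂ + 4) * Real.sqrt δ)
          ⊆ rot (a * Real.sqrt δ) ''
              rect (pPt δ ((k : ℝ) / 2) η' η'')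
                (c₁' * max ((k : ℝ) / 2) (1 / 2) * δ) (c₂' * Real.sqrt δ) := by
  intro c₁ c₂ hc₁ hc₂
  set C : ℝ := 2*(c₁+c₂+10)^2 with hCdef
  have hC0 : (0:ℝ) < C := by rw [hCdef]; positivity
  have hC200 : (200:ℝ) ≤ C := by
    rw [hCdef]; nlinarith [mul_pos hc₁ hc₂, sq_nonneg c₁, sq_nonneg c₂]
  clear_value C
  refine ⟨4*C, 4*C, by linarith, by linarith, ?_⟩
  intro δ hδ hδ' α₁ β₁ α₂ β₂ hα₁ hab₁ hβ₁ hJ₁ hα₂ hab₂ hβ₂ hJ₂ a k hk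
  intro η' hm1 η₀' hm2 η'' hm3 η₀'' hm4 hsum
  intro w hw
  obtain ⟨⟨ξ, hξ, rfl⟩, hrect⟩ := hw
  refine ⟨ξ, ?_, rfl⟩
  simp only [rect, pPt, Set.mem_setOf_eq] at hrect ⊢
  obtain ⟨hm1a, hm1b⟩ := hm1
  obtain ⟨hm2a, hm2b⟩ := hm2
  obtain ⟨hm3a, hm3b⟩ := hm3
  obtain ⟨hm4a, hm4b⟩ := hm4
  set s : ℝ := Real.sqrt δ with hsdef
  have hs0 : 0 < s := Real.sqrt_pos.mpr hδ
  have hs2 : s^2 = δ := Real.sq_sqrt hδ.le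
  clear_value s
  rw [← hs2] at hδ' hm1a hm1b hm2a hm2b hm3a hm3b hm4a hm4b hrect ⊢
  have hs2le : s^2 ≤ 1/1000000 := hδ'.le
  have hs3 : s ≤ 1/1000 := sLemma1 hs0 hs2le
  have hs2s : s^2 ≤ 0.001*s := sLemma2 hs0 hs3
  -- angle parameters
  set ℓ : ℝ := (k : ℝ)/2 with hldef
  set L : ℝ := max ℓ (1/2) with hLdef
  have hl0 : 0 ≤ ℓ := by rw [hldef]; positivity
  have hlL : ℓ ≤ L := by rw [hLdef]; exact le_max_left _ _
  have hL2 : (1:ℝ)/2 ≤ L := by rw [hLdef]; exact le_max_right _ _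
  have hmc : L = ℓ ∨ L = 1/2 := by rw [hLdef]; exact max_choice _ _
  clear_value ℓ L
  have hπ3 : (3:ℝ) < Real.pi := Real.pi_gt_three
  have hπ315 : Real.pi < 3.15 := Real.pi_lt_d2
  have hls : ℓ*s ≤ Real.pi/8 - s := by
    have h2 := mul_le_mul_of_nonneg_right hk hs0.le
    have h3 : (Real.pi/8 * s⁻¹ - 1)*s = Real.pi/8 - s := by
      field_simp
    rw [h3] at h2
    linarith
  have hLs : L*s ≤ 0.4 := by
    rcases hmc with h | h <;> rw [h]
    · linarith
    · linarith
  set θ : ℝ := ℓ * s with hθdef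
  clear_value θ
  have hθ0 : 0 ≤ θ := by rw [hθdef]; exact mul_nonneg hl0 hs0.le
  have hθLs : θ ≤ L*s := by rw [hθdef]; exact mul_le_mul_of_nonneg_right hlL hs0.le
  have hθ4 : θ ≤ 0.4 := le_trans hθLs hLs
  have hm0 : 0 < L*s^2 := mul_pos (by linarith) (by positivity)
  have hmle : L*s^2 ≤ 0.0004 := by
    have h1 : L*s^2 = (L*s)*s := by ring
    rw [h1]
    calc (L*s)*s ≤ 0.4*s := mul_le_mul_of_nonneg_right hLs hs0.le
      _ ≤ 0.0004 := by linarith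
  -- trig facts
  have hc9 : 0.9 ≤ Real.cos θ := cosLB hθ0 hθ4
  have hc1 : Real.cos θ ≤ 1 := Real.cos_le_one θ
  have hsin00 : 0 ≤ Real.sin θ := Real.sin_nonneg_of_nonneg_of_le_pi hθ0 (by linarith)
  have hsinle : Real.sin θ ≤ θ := by
    rcases eq_or_lt_of_le hθ0 with h | h
    · simp [← h]
    · exact (Real.sin_lt h).le
  have hsin9 : 0.9*θ ≤ Real.sin θ := sinLB hθ0 hθ4
  set cθ : ℝ := Real.cos θ with hcdef
  set sθ : ℝ := Real.sin θ with hsindef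
  have hpyth : sθ^2 + cθ^2 = 1 := by rw [hsindef, hcdef]; exact Real.sin_sq_add_cos_sq θ
  clear_value cθ sθ
  have hsθLs : sθ ≤ L*s := le_trans hsinle hθLs
  -- eta parameters
  set η : ℝ := η' + η'' with hηdef
  set d : ℝ := η' - η'' with hddef
  set d₀ : ℝ := η₀' - η₀'' with hd0def
  have hη1 : 1.9 ≤ η := by rw [hηdef]; linarith
  have hη2 : η ≤ 4.1 := by rw [hηdef]; linarith
  have hdl : -1.1 ≤ d := by rw [hddef]; linarith
  have hdu : d ≤ 1.1 := by rw [hddef]; linarith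
  have hd0l : -1.1 ≤ d₀ := by rw [hd0def]; linarith
  have hd0u : d₀ ≤ 1.1 := by rw [hd0def]; linarith
  have hddl : -(2.1*s) ≤ d - d₀ := by rw [hddef, hd0def]; linarith [hsum]
  have hddu : d - d₀ ≤ 2.1*s := by rw [hddef, hd0def]; linarith [hsum]
  rw [← hsum] at hrect
  clear_value η d d₀
  obtain ⟨hrX, hrY⟩ := hrect
  set X : ℝ := (rot (a * s) ξ).re with hXdef
  set Y : ℝ := (rot (a * s) ξ).im with hYdef
  set P : ℝ := ξ.re with hPdef
  set Q : ℝ := ξ.im with hQdef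
  -- rotation preserves norm
  have hnorm : X^2 + Y^2 = P^2 + Q^2 := by
    have hn : Complex.normSq (rot (a*s) ξ) = Complex.normSq ξ := by
      simp only [rot, Complex.normSq_eq_norm_sq, map_mul, Complex.norm_exp_ofReal_mul_I,
        one_pow, one_mul]
    simp only [Complex.normSq_apply] at hn
    rw [hXdef, hYdef, hPdef, hQdef]
    linear_combination hn
  clear_value X Y P Q
  -- basic products
  have hηc171 : 1.71 ≤ η*cθ := by
    have t := mul_nonneg (show (0:ℝ) ≤ η - 1.9 by linarith) (show (0:ℝ) ≤ cθ - 0.9 by linarith)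
    linarith [t]
  have hηcle : η*cθ ≤ 4.1 := by
    have t := mul_nonneg (show (0:ℝ) ≤ η by linarith) (show (0:ℝ) ≤ 1 - cθ by linarith)
    linarith [t]
  have hη2d2 : 2.4 ≤ η^2 - d^2 := by
    have t1 := mul_nonneg (show (0:ℝ) ≤ η - 1.9 by linarith) (show (0:ℝ) ≤ η + 1.9 by linarith)
    have t2 := mul_nonneg (show (0:ℝ) ≤ 1.1 - d by linarith) (show (0:ℝ) ≤ 1.1 + d by linarith)
    linarith [t1, t2]
  have hd2s : d^2 ≤ 1.21 := by
    have t := mul_nonneg (show (0:ℝ) ≤ 1.1 - d by linarith) (show (0:ℝ) ≤ 1.1 + d by linarith)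
    linarith [t]
  have hCm0 : 0 ≤ C*(L*s^2) := mul_nonneg hC0.le hm0.le
  -- key estimate from the rectangle membership
  have hp1 : |η*cθ| ≤ 4.1 := abs_le.mpr ⟨by linarith, hηcle⟩
  have hp2 : |d₀*sθ| ≤ 1.1*(L*s) := by
    rw [abs_mul]
    refine mul_le_mul (abs_le.mpr ⟨hd0l, hd0u⟩) ?_ (abs_nonneg _) (by norm_num)
    rw [abs_of_nonneg hsin00]; exact hsθLs
  have hp4 : |d*sθ| ≤ 1.1*(L*s) := by
    rw [abs_mul]
    refine mul_le_mul (abs_le.mpr ⟨hdl, hdu⟩) ?_ (abs_nonneg _) (by norm_num)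
    rw [abs_of_nonneg hsin00]; exact hsθLs
  have hp3 : |d₀*sθ - d*sθ| ≤ (2.1*s)*(L*s) := by
    have e : d₀*sθ - d*sθ = (d₀-d)*sθ := by ring
    rw [e, abs_mul]
    refine mul_le_mul (abs_le.mpr ⟨by linarith, by linarith⟩) ?_ (abs_nonneg _) (by linarith)
    rw [abs_of_nonneg hsin00]; exact hsθLs
  have T1 := sqApprox hrX hp1
  have T2 := sqApprox hrY hp2
  have T3 := sqApprox hp3 hp4
  have hpoly : 0.0004*c₁^2 + 8.2*c₁ + 2*(c₂+4)^2 + 2.2*(c₂+4) + 2 ≤ C := by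
    rw [hCdef]; exact polyLemma hc₁ hc₂
  have hkey : |X^2 + Y^2 - (η^2*cθ^2 + d^2*sθ^2)| ≤ C*(L*s^2) := by
    have e1 : X^2 + Y^2 - (η^2*cθ^2 + d^2*sθ^2)
        = (X^2 - (η*cθ)^2) + (Y^2 - (d₀*sθ)^2) + ((d₀*sθ)^2 - (d*sθ)^2) := by ring
    rw [e1]
    refine (abs_add_three _ _ _).trans ?_
    have hsum3 : |X^2 - (η*cθ)^2| + |Y^2 - (d₀*sθ)^2| + |(d₀*sθ)^2 - (d*sθ)^2|
        ≤ (c₁*L*s^2)*((c₁*L*s^2) + 2*4.1) + ((c₂+4)*s)*((c₂+4)*s + 2*(1.1*(L*s)))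
          + ((2.1*s)*(L*s))*((2.1*s)*(L*s) + 2*(1.1*(L*s))) := by
      linarith [T1, T2, T3]
    refine hsum3.trans ?_
    refine keyArith ?_ ?_ ?_ ?_ ?_ hm0.le
    · exact mul_nonneg (mul_nonneg (sq_nonneg c₁) hm0.le) (by linarith)
    · exact mul_nonneg (mul_nonneg (sq_nonneg _) (sq_nonneg s)) (by linarith)
    · exact mul_nonneg hm0.le (by linarith)
    · exact mul_nonneg hm0.le (by linarith)
    · exact mul_nonneg (by linarith) hm0.le
  -- case analysis on the curve
  simp only [tildeE, Set.mem_union, Set.mem_setOf_eq] at hξ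
  rcases hξ with hcur | hseg
  · -- on the ellipse / degenerate segment
    simp only [curveE] at hcur
    by_cases he : η' = η''
    · -- degenerate case η' = η''
      rw [if_pos he] at hcur
      simp only [Set.mem_setOf_eq] at hcur
      rw [← hQdef, ← hPdef, ← hηdef] at hcur
      obtain ⟨hQ0, h1P, hPη⟩ := hcur
      have hdz : d = 0 := by rw [hddef, he, sub_self]
      have hk2 : |P^2 - η^2*cθ^2| ≤ C*(L*s^2) := by
        have e : P^2 - η^2*cθ^2 = X^2 + Y^2 - (η^2*cθ^2 + d^2*sθ^2) := by
          linear_combination (-1)*hnorm + (-Q)*hQ0 + (d*sθ^2)*hdz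
        rw [e]; exact hkey
      have hfac : |P - η*cθ| * (P + η*cθ) = |P^2 - η^2*cθ^2| := by
        rw [← abs_of_nonneg (show (0:ℝ) ≤ P + η*cθ by linarith), ← abs_mul]
        congr 1; ring
      constructor
      · have h9 : |P - η*cθ| * 2.71 ≤ |P^2 - η^2*cθ^2| := by
          rw [← hfac]
          exact mul_le_mul_of_nonneg_left (by linarith) (abs_nonneg _)
        linarith [h9, hk2, hCm0]
      · rw [hQ0, hdz]
        simp only [zero_mul, sub_zero, abs_zero]
        positivity
    · -- genuine ellipse case
      rw [if_neg he] at hcur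
      simp only [Set.mem_setOf_eq] at hcur
      rw [← hQdef, ← hPdef, ← hηdef, ← hddef] at hcur
      obtain ⟨hell, h1P, hPη, hsg1, hsg2⟩ := hcur
      have hdne : d ≠ 0 := by rw [hddef]; exact sub_ne_zero.mpr he
      have hηne : η ≠ 0 := by intro h; rw [h] at hη1; norm_num at hη1
      set u : ℝ := P/η with hudef
      set v : ℝ := Q/d with hvdef
      clear_value u v
      have hPu : P = η*u := by rw [hudef]; field_simp
      have hQv : Q = d*v := by rw [hvdef]; field_simp
      have huv : u^2 + v^2 = 1 := by
        rw [hudef, hvdef, div_pow, div_pow]; exact hell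
      have hEeq : X^2 + Y^2 - (η^2*cθ^2 + d^2*sθ^2) = (η^2 - d^2)*(u^2 - cθ^2) := by
        linear_combination hnorm + (P + η*u)*hPu + (Q + d*v)*hQv + d^2*huv - d^2*hpyth
      have hE2 : |(η^2 - d^2)*(u^2 - cθ^2)| ≤ C*(L*s^2) := by rw [← hEeq]; exact hkey
      have hu2c : |u^2 - cθ^2| ≤ 0.42*(C*(L*s^2)) := by
        have h1 : |u^2 - cθ^2| * 2.4 ≤ |u^2 - cθ^2| * (η^2 - d^2) :=
          mul_le_mul_of_nonneg_left (by linarith) (abs_nonneg _)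
        have h2 : |u^2 - cθ^2| * (η^2 - d^2) = |(η^2 - d^2)*(u^2 - cθ^2)| := by
          rw [abs_mul, abs_of_nonneg (show (0:ℝ) ≤ η^2 - d^2 by linarith)]; ring
        linarith [hE2, hCm0, h1, h2.le, h2.ge]
      have hv2c : |v^2 - sθ^2| ≤ 0.42*(C*(L*s^2)) := by
        have e : v^2 - sθ^2 = -(u^2 - cθ^2) := by linear_combination huv - hpyth
        rw [e, abs_neg]; exact hu2c
      have hu0 : 0 < u := by
        rw [hudef]; exact div_pos (by linarith) (by linarith)
      have hu24 : 0.24 ≤ u := by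
        have h41 : 0 ≤ (4.1 - η)*u := mul_nonneg (by linarith) hu0.le
        have h42 : 1 ≤ η*u := by rw [← hPu]; exact h1P
        linarith [h41, h42]
      have hv0 : 0 ≤ v := by
        rw [hvdef, div_nonneg_iff]
        rcases lt_or_gt_of_ne hdne with h | h
        · right
          refine ⟨hsg2 ?_, h.le⟩
          rw [hddef] at h; linarith
        · left
          refine ⟨hsg1 ?_, h.le⟩
          rw [hddef] at h; linarith
      constructor
      · -- real part
        have habs1 : |P - η*cθ| = η * |u - cθ| := by
          rw [hPu, ← mul_sub, abs_mul, abs_of_nonneg (show (0:ℝ) ≤ η by linarith)]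
        have hufac : |u - cθ| * (u + cθ) = |u^2 - cθ^2| := by
          rw [← abs_of_nonneg (show (0:ℝ) ≤ u + cθ by linarith), ← abs_mul]
          congr 1; ring
        have h8 : |u - cθ| ≤ 0.37*(C*(L*s^2)) := by
          have h9 : |u - cθ| * 1.14 ≤ |u^2 - cθ^2| := by
            rw [← hufac]
            exact mul_le_mul_of_nonneg_left (by linarith) (abs_nonneg _)
          linarith [hu2c, hCm0]
        rw [habs1]
        have h43 : 0 ≤ (4.1 - η) * |u - cθ| := mul_nonneg (by linarith) (abs_nonneg _)
        linarith [h43, h8, hCm0]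
      · -- imaginary part
        have e2 : d*v - d*sθ = d*(v - sθ) := by ring
        rw [hQv, e2, abs_mul]
        have hvfac : |v - sθ| * (v + sθ) = |v^2 - sθ^2| := by
          rw [← abs_of_nonneg (show (0:ℝ) ≤ v + sθ by linarith), ← abs_mul]
          congr 1; ring
        have hdabs : |d| ≤ 1.1 := abs_le.mpr ⟨hdl, hdu⟩
        have h10 : |d| * |v - sθ| ≤ 1.1 * |v - sθ| :=
          mul_le_mul_of_nonneg_right hdabs (abs_nonneg _)
        rcases hmc with hcase | hcase
        · -- L = ℓ : sin θ ≥ 0.9 L s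
          have hsθ9 : 0.9*(L*s) ≤ sθ := by
            rw [hcase, ← hθdef]; exact hsin9
          have hw : |v - sθ| ≤ 0.47*(C*s) := by
            have h9 : |v - sθ| * (0.9*(L*s)) ≤ |v^2 - sθ^2| := by
              rw [← hvfac]
              exact mul_le_mul_of_nonneg_left (by linarith) (abs_nonneg _)
            refine divBound1 (abs_nonneg _) ?_ (show (0:ℝ) < L by linarith) hs0 hC0
            linarith [hv2c]
          have hCs : 0 ≤ C*s := (mul_pos hC0 hs0).le
          linarith [h10, hw, hCs]
        · -- L = 1/2
          rw [hcase] at hv2c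
          have hvs : |v - sθ| ≤ v + sθ := abs_le.mpr ⟨by linarith, by linarith⟩
          have hsq : |v - sθ|^2 ≤ 0.21*(C*s^2) := by
            have h9 : |v - sθ|^2 ≤ |v^2 - sθ^2| := by
              rw [← hvfac, sq]
              exact mul_le_mul_of_nonneg_left hvs (abs_nonneg _)
            linarith [hv2c]
          have h11 : 1.1 * |v - sθ| ≤ 4*C*s := by
            refine sqrtBound (by positivity) ?_ hC200 hs0
            have e : (1.1 * |v - sθ|)^2 = 1.21 * |v - sθ|^2 := by ring
            rw [e]
            have hCs2 : 0 ≤ C*s^2 := mul_nonneg hC0.le (sq_nonneg s)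
            linarith [hsq]
          linarith [h10, h11]
  · -- on the horizontal segment
    rw [← hQdef, ← hPdef, ← hηdef] at hseg
    obtain ⟨hQ0, hPl, hPu5⟩ := hseg
    have hk2 : |P^2 - (η^2*cθ^2 + d^2*sθ^2)| ≤ C*(L*s^2) := by
      have e : P^2 - (η^2*cθ^2 + d^2*sθ^2) = X^2 + Y^2 - (η^2*cθ^2 + d^2*sθ^2) := by
        linear_combination (-1)*hnorm + (-Q)*hQ0
      rw [e]; exact hkey
    rw [abs_le] at hk2
    have hPsq : η^2 ≤ P^2 := pow_le_pow_left₀ (by linarith) hPl 2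
    have hseg1 : (η^2 - d^2)*sθ^2 ≤ C*(L*s^2) := by
      have hpyth2 : η^2*sθ^2 + η^2*cθ^2 = η^2 := by linear_combination η^2*hpyth
      linarith [hk2.2, hpyth2, hPsq]
    have hsθ2 : 2.4*sθ^2 ≤ C*(L*s^2) := by
      have t : 0 ≤ (η^2 - d^2 - 2.4)*sθ^2 := mul_nonneg (by linarith) (sq_nonneg sθ)
      linarith [t, hseg1]
    have hd2s2 : d^2*sθ^2 ≤ 1.21*sθ^2 := by
      have t : 0 ≤ (1.21 - d^2)*sθ^2 := mul_nonneg (by linarith) (sq_nonneg sθ)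
      linarith [t]
    constructor
    · -- real part
      have hrelow : 0 ≤ P - η*cθ := by
        have t : 0 ≤ η*(1 - cθ) := mul_nonneg (by linarith) (by linarith)
        linarith [t, hPl]
      have hrehigh : (P - η*cθ)*(P + η*cθ) ≤ 1.51*(C*(L*s^2)) := by
        have e : (P - η*cθ)*(P + η*cθ) = P^2 - η^2*cθ^2 := by ring
        rw [e]
        linarith [hk2.2, hd2s2, hsθ2]
      have h12 : P - η*cθ ≤ 0.42*(C*(L*s^2)) := by
        have t : 0 ≤ (P - η*cθ)*(P + η*cθ - 3.61) :=
          mul_nonneg hrelow (by linarith [hPl, hη1, hηc171])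
        linarith [t, hrehigh, hCm0]
      rw [abs_of_nonneg hrelow]
      linarith [h12, hCm0]
    · -- imaginary part
      rw [hQ0]
      have habs2 : |0 - d*sθ| = |d| * sθ := by
        rw [zero_sub, abs_neg, abs_mul, abs_of_nonneg hsin00]
      rw [habs2]
      have hdabs : |d| ≤ 1.1 := abs_le.mpr ⟨hdl, hdu⟩
      have h16 : |d| * sθ ≤ 1.1 * sθ := mul_le_mul_of_nonneg_right hdabs hsin00
      rcases hmc with hcase | hcase
      · -- L = ℓ
        have hsθ9 : 0.9*(L*s) ≤ sθ := by
          rw [hcase, ← hθdef]; exact hsin9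
        have h13 : (0.9*(L*s))^2 ≤ sθ^2 :=
          pow_le_pow_left₀ (by positivity) hsθ9 2
        have hLC : L ≤ 0.52*C := divBound2 hsθ2 h13 (by linarith) hs0
        have h14 : sθ ≤ 0.52*C*s := by
          have h17 : L*s ≤ 0.52*C*s := by
            have := mul_le_mul_of_nonneg_right hLC hs0.le
            linarith [this]
          linarith [hsinle, hθLs]
        have hCs : 0 ≤ C*s := (mul_pos hC0 hs0).le
        linarith [h16, h14, hCs]
      · -- L = 1/2
        rw [hcase] at hsθ2
        refine sqrtBound (by positivity) ?_ hC200 hs0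
        have e : (|d| * sθ)^2 = d^2*sθ^2 := by
          rw [mul_pow, sq_abs]
        rw [e]
        have hCs2 : 0 ≤ C*s^2 := mul_nonneg hC0.le (sq_nonneg s)
        linarith [hd2s2, hsθ2, hCs2]
end

section
/- There exist constants C > 0 and C_0 > 0, independent of δ and of J_1, J_2, such that for all ℓ, ℓ' ∈ ℕ_0^* with 0 ≤ ℓ, ℓ' ≤ (π/8) δ^{-1/2} − 1, all η_0', η_1' ∈ J̃_1 and η_0'', η_1'' ∈ J̃_2 with η_0' + η_0'' = η_1' + η_1'' = η, and every real b with C_0 ≤ b ≤ (π/4) δ^{-1/2} − 2, the rectangles R_{ℓ,δ}(η_0',η_0'') and ℛ_{b δ^{1/2}} R_{ℓ',δ}(η_1',η_1'') are disjoint, where R_{ℓ,δ}(η',η'') = p_{ℓ,δ}(η',η'') + R_0(c_1 ℓ_* δ, (c_2+4) δ^{1/2}) for fixed constants c_1, c_2 > 0. -/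
open Set Pointwise

private lemma sin_lb' {y : ℝ} (h0 : 0 ≤ y) (h1 : y ≤ 2/5) : 0.96*y ≤ Real.sin y := by
  rcases eq_or_lt_of_le h0 with h|h
  · simp [← h]
  · have := Real.sin_gt_sub_cube h
    nlinarith [sq_nonneg y]

private lemma cos_lb394 {y : ℝ} (h0 : 0 ≤ y) (h1 : y ≤ 0.394) : (0.92:ℝ) ≤ Real.cos y := by
  nlinarith [Real.one_sub_sq_div_two_le_cos (x := y)]

private lemma cos_lb197 {y : ℝ} (h : |y| ≤ 0.197) : (0.98:ℝ) ≤ Real.cos y := by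
  nlinarith [Real.one_sub_sq_div_two_le_cos (x := y), sq_abs y, abs_nonneg y]

private lemma hlp1 {cm g : ℝ} (h1 : 0.92 ≤ cm) (h2 : 0 ≤ g) : 1.84*g ≤ 2*cm*g := by nlinarith

private lemma hlp2 {sm m hh : ℝ} (h1 : 0.96*m ≤ sm) (h2 : 0 ≤ hh) (h3 : 0 ≤ m) :
    1.92*(m*hh) ≤ 2*sm*hh := by nlinarith

private lemma hlp3 {s q g : ℝ} (hs : 0 ≤ s) (hq : |q| ≤ 1) (hg : 0 ≤ g) :
    s * |q| * g ≤ s*g := by nlinarith [abs_nonneg q, mul_nonneg hs hg]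

private lemma hlp5 {C r q : ℝ} (hc : |C| ≤ 1) (hr : |r| ≤ 1.01) : |C*(r*q)| ≤ 1.01*|q| := by
  rw [abs_mul, abs_mul]
  nlinarith [abs_nonneg q, abs_nonneg r, abs_nonneg C,
    mul_le_mul_of_nonneg_right hr (abs_nonneg q)]

private lemma hlp6 {s η cn : ℝ} (hs : 0 ≤ s) (hη : 1.99 ≤ η) (hcn : 0.98 ≤ cn)
    (hcnu : cn ≤ 1) (hηu : η ≤ 4.01) : 1.95*s ≤ s*η*cn := by
  nlinarith [mul_le_mul_of_nonneg_left (mul_le_mul hη hcn (by norm_num) (by linarith)) hs]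

private lemma hlpA {c₁ ε θ θ' : ℝ} (hc₁ : 0 ≤ c₁) (hε : 0 ≤ ε)
    (h1 : θ+ε ≤ 0.394) (h2 : θ'+ε ≤ 0.394) (h3 : 0 ≤ θ) (h4 : 0 ≤ θ') :
    c₁*(θ+ε)*ε + c₁*(θ'+ε)*ε ≤ 0.79*(c₁*ε) := by
  nlinarith [mul_le_mul_of_nonneg_right (mul_le_mul_of_nonneg_left h1 hc₁) hε,
    mul_le_mul_of_nonneg_right (mul_le_mul_of_nonneg_left h2 hc₁) hε]

private lemma hlpSqrt {δ ε : ℝ} (hδ : 0 < δ) (hδ6 : δ < 1/1000000) (hε : 0 < ε)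
    (hε2 : ε*ε = δ) : ε ≤ 1/1000 ∧ δ ≤ 0.001*ε := by
  constructor
  · nlinarith
  · nlinarith

private lemma hlp3b {c x hh : ℝ} (hc0 : 0 ≤ c) (hc1 : c ≤ 1) (hx : 0 ≤ x) (hh0 : 0 ≤ hh) :
    c*x*hh ≤ x*hh := by nlinarith [mul_nonneg hx hh0]


set_option maxHeartbeats 800000 in
private lemma case1 (c₁ c₂ ε s A g : ℝ) (hc₁ : 0 < c₁) (hc₂ : 0 < c₂) (hε : 0 < ε)
    (hsl48 : 48*((c₁+c₂+5)*ε) ≤ s) (hsu : s ≤ 0.394) (hs0 : 0 < s)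
    (hA0 : 0 ≤ A) (hAub : A ≤ 0.79*(c₁*ε))
    (h1 : 1.84*g ≤ A*s + 2*((c₂+4)*ε) + 0.8*ε) (hcase : s/10 < g) : False := by
  have hAs : A*s ≤ (0.79*(c₁*ε))*0.394 :=
    mul_le_mul hAub hsu hs0.le (by positivity)
  nlinarith

set_option maxHeartbeats 800000 in
private lemma case2 (c₁ c₂ ε s x m g hh η A : ℝ)
    (hc₁ : 0 < c₁) (hc₂ : 0 < c₂) (hε : 0 < ε) (hη1 : 1.99 ≤ η)
    (hg0 : 0 ≤ g) (hh0 : 0 ≤ hh) (hs0 : 0 < s)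
    (hcase : g ≤ s/10)
    (h4 : 1.95*s ≤ g + 1.01*x)
    (h3 : η*(x^2 - s^2) ≤ s*g + x*hh)
    (h2 : 1.92*(m*hh) ≤ A + 2*(s*((c₂+4)*ε)) + 0.8*s*ε)
    (hAub2 : A ≤ (2*m+2*ε)*(c₁*ε))
    (q2 : 48*(c₁*ε) ≤ s) (q3 : 12*((2*c₂+8.8)*ε) ≤ s) (q4 : 240*ε ≤ s)
    (hxm : x ≤ m) (hx0 : 0 ≤ x) : False := by
  have q1 : 1.83*s ≤ x := by linarith
  have hx0' : 0 < x := by linarith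
  have hm0' : 0 < m := lt_of_lt_of_le hx0' hxm
  have hq1sq : (1.83*s)*(1.83*s) ≤ x*x :=
    mul_le_mul q1 q1 (by positivity) hx0
  have hss : 3.34*s^2 ≤ x^2 := by nlinarith [hq1sq, sq_nonneg s]
  have hsg : s*g ≤ s*(s/10) := mul_le_mul_of_nonneg_left hcase hs0.le
  have hx2s : 0 ≤ x^2 - s^2 := by nlinarith [sq_nonneg s]
  have hηx : 1.99*(x^2 - s^2) ≤ η*(x^2 - s^2) := by
    nlinarith [mul_nonneg (by linarith : (0:ℝ) ≤ η - 1.99) hx2s]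
  have h5 : 1.36*x^2 ≤ x*hh := by nlinarith [hηx, hsg, hss, h3, mul_self_nonneg s, sq_nonneg x]
  have h2' : 1.92*(m*hh) ≤ (2*m+2*ε)*(c₁*ε) + 2*(s*((c₂+4)*ε)) + 0.8*s*ε := by linarith
  have h6 : (1.92*(m*hh))*x ≤ ((2*m+2*ε)*(c₁*ε) + 2*(s*((c₂+4)*ε)) + 0.8*s*ε)*x :=
    mul_le_mul_of_nonneg_right h2' hx0
  have h5m := mul_le_mul_of_nonneg_left h5 hm0'.le
  have h7 : 2.61*(m*x^2) ≤ ((2*m+2*ε)*(c₁*ε) + 2*(s*((c₂+4)*ε)) + 0.8*s*ε)*x := by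
    nlinarith [h5m, h6]
  have r1 : c₁*ε ≤ s/48 := by linarith
  have r3 : (2*c₂+8.8)*ε ≤ s/12 := by linarith
  have hxm2 : x*x ≤ x*m := mul_le_mul_of_nonneg_left hxm hx0
  have hsm2 : 3.34*(s*s) ≤ m*x := by nlinarith [hq1sq, hxm2, mul_self_nonneg s, mul_self_nonneg x]
  have e1 : (2*m)*(c₁*ε) ≤ (2*m)*(s/48) :=
    mul_le_mul_of_nonneg_left r1 (by linarith)
  have e2m : m*(1.83*s) ≤ m*x := mul_le_mul_of_nonneg_left q1 hm0'.le
  have e3 : (2*ε)*(c₁*ε) ≤ (2*(s/240))*(s/48) :=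
    mul_le_mul (by linarith) r1 (by positivity) (by positivity)
  have e4 : s*((2*c₂+8.8)*ε) ≤ s*(s/12) := mul_le_mul_of_nonneg_left r3 hs0.le
  have h8 : (2*m+2*ε)*(c₁*ε) + 2*(s*((c₂+4)*ε)) + 0.8*s*ε ≤ 0.1*(m*x) := by
    nlinarith [e1, e2m, e3, e4, hsm2]
  have h9 : ((2*m+2*ε)*(c₁*ε) + 2*(s*((c₂+4)*ε)) + 0.8*s*ε)*x ≤ (0.1*(m*x))*x :=
    mul_le_mul_of_nonneg_right h8 hx0
  nlinarith [h7, h9, mul_pos hm0' (mul_pos hx0' hx0')]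

set_option maxHeartbeats 1000000 in
private lemma core (c₁ c₂ ε θ θ' φ η d₀ d₁ : ℝ)
    (hc₁ : 0 < c₁) (hc₂ : 0 < c₂)
    (hε : 0 < ε) (hε3 : ε ≤ 1/1000)
    (hθ0 : 0 ≤ θ) (hθ1 : θ ≤ Real.pi/8 - ε)
    (hθ'0 : 0 ≤ θ') (hθ'1 : θ' ≤ Real.pi/8 - ε)
    (hφl : 100*(c₁+c₂+5)*ε ≤ φ) (hφu : φ ≤ Real.pi/4 - 2*ε)
    (hη1 : 1.99 ≤ η) (hη2 : η ≤ 4.01)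
    (hd₀ : |d₀| ≤ 1.01) (hd₁ : |d₁| ≤ 1.01) (hdd : |d₀ - d₁| ≤ 2.01*ε)
    (hI : |(Real.cos (φ/2)*(η*Real.cos θ) + Real.sin (φ/2)*(d₀*Real.sin θ)) -
          (Real.cos (φ/2)*(η*Real.cos θ') - Real.sin (φ/2)*(d₁*Real.sin θ'))| ≤
          (c₁*(θ+ε)*ε + c₁*(θ'+ε)*ε) + 2*(Real.sin (φ/2)*((c₂+4)*ε)))
    (hII : |(-(Real.sin (φ/2))*(η*Real.cos θ) + Real.cos (φ/2)*(d₀*Real.sin θ)) -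
          (Real.sin (φ/2)*(η*Real.cos θ') + Real.cos (φ/2)*(d₁*Real.sin θ'))| ≤
          (c₁*(θ+ε)*ε + c₁*(θ'+ε)*ε)*Real.sin (φ/2) + 2*((c₂+4)*ε)) : False := by
  have hπu : Real.pi < 3.15 := Real.pi_lt_d2
  have hπl : (3.141 : ℝ) < Real.pi := by linarith [Real.pi_gt_d6]
  set s := Real.sin (φ/2) with hs
  set c := Real.cos (φ/2) with hc
  have hpy : s^2 + c^2 = 1 := by rw [hs, hc]; exact Real.sin_sq_add_cos_sq _
  have hφ0 : 0 < φ := lt_of_lt_of_le (by positivity) hφl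
  have hφ8 : φ/2 ≤ 0.394 := by linarith
  have hsl : 0.48*φ ≤ s := by
    have := sin_lb' (by positivity : (0:ℝ) ≤ φ/2) (by linarith)
    rw [hs]; linarith
  have hsu : s ≤ 0.394 := le_trans (Real.sin_le (by positivity)) hφ8
  have hs0 : 0 < s := lt_of_lt_of_le (by positivity) hsl
  have hcu : c ≤ 1 := Real.cos_le_one _
  have hcl : (0.92:ℝ) ≤ c := by rw [hc]; exact cos_lb394 (by positivity) hφ8
  have hc0 : 0 < c := by linarith
  set m := (θ+θ')/2 with hm
  set n := (θ-θ')/2 with hn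
  have hm0 : 0 ≤ m := by rw [hm]; positivity
  have hm1 : m ≤ 0.394 := by rw [hm]; linarith
  have hnm : |n| ≤ m := by
    rw [abs_le]; constructor <;> rw [hn, hm] <;> linarith
  have hnb : |n| ≤ 0.197 := by
    rw [abs_le]; constructor <;> rw [hn] <;> linarith
  set sm := Real.sin m with hsm
  set cm := Real.cos m with hcm
  set sn := Real.sin n with hsn
  set cn := Real.cos n with hcn
  have hpyn : sn^2 + cn^2 = 1 := by rw [hsn, hcn]; exact Real.sin_sq_add_cos_sq _
  have hsml : 0.96*m ≤ sm := by rw [hsm]; exact sin_lb' hm0 (by linarith)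
  have hsm0 : 0 ≤ sm := by linarith
  have hcml : (0.92:ℝ) ≤ cm := by rw [hcm]; exact cos_lb394 hm0 hm1
  have hcmu : cm ≤ 1 := Real.cos_le_one _
  have hcnl : (0.98:ℝ) ≤ cn := by rw [hcn]; exact cos_lb197 hnb
  have hcnu : cn ≤ 1 := Real.cos_le_one _
  set x := |sn| with hx
  have hx0 : 0 ≤ x := abs_nonneg _
  have hxm : x ≤ m := by
    rw [hx, hsn]; exact le_trans Real.abs_sin_le_abs hnm
  have hx2 : x^2 = sn^2 := sq_abs _
  have hθeq : θ = m + n := by rw [hm, hn]; ring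
  have hθ'eq : θ' = m - n := by rw [hm, hn]; ring
  have hcosθ : Real.cos θ = cm*cn - sm*sn := by rw [hθeq, Real.cos_add]
  have hsinθ : Real.sin θ = sm*cn + cm*sn := by rw [hθeq, Real.sin_add]
  have hcosθ' : Real.cos θ' = cm*cn + sm*sn := by rw [hθ'eq, Real.cos_sub]
  have hsinθ' : Real.sin θ' = sm*cn - cm*sn := by rw [hθ'eq, Real.sin_sub]
  have hsinθb : |Real.sin θ| ≤ 0.394 := by
    refine le_trans Real.abs_sin_le_abs ?_
    rw [abs_of_nonneg hθ0]; linarith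
  set A := c₁*(θ+ε)*ε + c₁*(θ'+ε)*ε with hA
  have hA0 : 0 ≤ A := by rw [hA]; positivity
  have hAub : A ≤ 0.79*(c₁*ε) := by
    rw [hA]; exact hlpA hc₁.le hε.le (by linarith) (by linarith) hθ0 hθ'0
  set G := s*η*cn - c*d₁*sn with hG
  set H := c*η*sn - s*d₁*cn with hH
  set g := |G| with hg
  set hh := |H| with hhh
  have hg0 : 0 ≤ g := abs_nonneg _
  have hhh0 : 0 ≤ hh := abs_nonneg _
  have herr : |c*((d₀ - d₁)*Real.sin θ)| ≤ 0.8*ε := by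
    rw [abs_mul, abs_mul]
    calc |c| * (|d₀ - d₁| * |Real.sin θ|) ≤ 1 * (2.01*ε * 0.394) := by
          apply mul_le_mul (by rw [abs_of_nonneg hc0.le]; exact hcu)
            (mul_le_mul hdd hsinθb (abs_nonneg _) (by positivity))
            (by positivity) (by norm_num)
      _ ≤ 0.8*ε := by linarith
  have herr2 : |s*((d₀ - d₁)*Real.sin θ)| ≤ 0.8*(s*ε) := by
    rw [abs_mul, abs_of_nonneg hs0.le]
    have t : |(d₀ - d₁)*Real.sin θ| ≤ 0.8*ε := by
      rw [abs_mul]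
      calc |d₀ - d₁| * |Real.sin θ| ≤ 2.01*ε * 0.394 :=
            mul_le_mul hdd hsinθb (abs_nonneg _) (by positivity)
        _ ≤ 0.8*ε := by linarith
    refine le_trans (mul_le_mul_of_nonneg_left t hs0.le) (le_of_eq (by ring))
  -- h1
  have hIIe : (-(s)*(η*Real.cos θ) + c*(d₀*Real.sin θ)) -
          (s*(η*Real.cos θ') + c*(d₁*Real.sin θ')) =
          (-(2*cm))*G + c*((d₀ - d₁)*Real.sin θ) := by
    rw [hcosθ, hcosθ', hsinθ', hG, hsinθ]; ring
  have h1 : 1.84 * g ≤ A*s + 2*((c₂+4)*ε) + 0.8*ε := by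
    have tt := hII
    rw [hIIe] at tt
    have t1 : |(-(2*cm))*G| ≤ |(-(2*cm))*G + c*((d₀ - d₁)*Real.sin θ)| + 0.8*ε := by
      have tr := abs_sub ((-(2*cm))*G + c*((d₀ - d₁)*Real.sin θ)) (c*((d₀ - d₁)*Real.sin θ))
      have e0 : (-(2*cm))*G + c*((d₀ - d₁)*Real.sin θ) - c*((d₀ - d₁)*Real.sin θ)
          = (-(2*cm))*G := by ring
      rw [e0] at tr
      linarith
    have t2 : 1.84*g ≤ |(-(2*cm))*G| := by
      rw [abs_mul, abs_neg, abs_of_nonneg (by linarith : (0:ℝ) ≤ 2*cm), ← hg]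
      exact hlp1 hcml hg0
    calc 1.84*g ≤ |(-(2*cm))*G| := t2
      _ ≤ |(-(2*cm))*G + c*((d₀ - d₁)*Real.sin θ)| + 0.8*ε := t1
      _ ≤ A*s + 2*((c₂+4)*ε) + 0.8*ε := add_le_add_left tt _
  -- h2
  have hIe : (c*(η*Real.cos θ) + s*(d₀*Real.sin θ)) -
          (c*(η*Real.cos θ') - s*(d₁*Real.sin θ')) =
          (-(2*sm))*H + s*((d₀ - d₁)*Real.sin θ) := by
    rw [hcosθ, hcosθ', hsinθ', hH, hsinθ]; ring
  have h2 : 1.92*(m*hh) ≤ A + 2*(s*((c₂+4)*ε)) + 0.8*s*ε := by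
    have tt := hI
    rw [hIe] at tt
    have t1 : |(-(2*sm))*H| ≤ |(-(2*sm))*H + s*((d₀ - d₁)*Real.sin θ)| + 0.8*(s*ε) := by
      have tr := abs_sub ((-(2*sm))*H + s*((d₀ - d₁)*Real.sin θ)) (s*((d₀ - d₁)*Real.sin θ))
      have e0 : (-(2*sm))*H + s*((d₀ - d₁)*Real.sin θ) - s*((d₀ - d₁)*Real.sin θ)
          = (-(2*sm))*H := by ring
      rw [e0] at tr
      linarith
    have t2 : 1.92*(m*hh) ≤ |(-(2*sm))*H| := by
      rw [abs_mul, abs_neg, abs_of_nonneg (by linarith : (0:ℝ) ≤ 2*sm), ← hhh]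
      exact hlp2 hsml hhh0 hm0
    calc 1.92*(m*hh) ≤ |(-(2*sm))*H| := t2
      _ ≤ |(-(2*sm))*H + s*((d₀ - d₁)*Real.sin θ)| + 0.8*(s*ε) := t1
      _ ≤ A + 2*(s*((c₂+4)*ε)) + 0.8*(s*ε) := add_le_add_left tt _
      _ = A + 2*(s*((c₂+4)*ε)) + 0.8*s*ε := by ring
  -- identity and h3
  have hid : s*cn*G - c*sn*H = η*(s^2 - sn^2) := by
    rw [hG, hH]; linear_combination (-(η*sn^2))*hpy + (η*s^2)*hpyn
  have h3 : η*(x^2 - s^2) ≤ s*g + x*hh := by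
    have u1 : |s*cn*G| ≤ s*g := by
      rw [abs_mul, abs_mul, abs_of_nonneg hs0.le, ← hg]
      exact hlp3 hs0.le (by rw [abs_of_nonneg (by linarith : (0:ℝ) ≤ cn)]; exact hcnu) hg0
    have u2 : |c*sn*H| ≤ x*hh := by
      rw [abs_mul, abs_mul, abs_of_nonneg hc0.le, ← hhh, ← hx]
      exact hlp3b hc0.le hcu hx0 hhh0
    have t1 : |s*cn*G - c*sn*H| ≤ s*g + x*hh := le_trans (abs_sub _ _) (by linarith)
    rw [hid] at t1
    have t3 := neg_abs_le (η*(s^2 - sn^2))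
    rw [hx2]
    linarith
  -- h4
  have h4 : 1.95*s ≤ g + 1.01*x := by
    have e : s*η*cn = G + c*(d₁*sn) := by rw [hG]; ring
    have t2 : |c*(d₁*sn)| ≤ 1.01*x := by
      rw [hx]
      exact hlp5 (by rw [abs_of_nonneg hc0.le]; exact hcu) hd₁
    have t1 : s*η*cn ≤ g + 1.01*x := by
      rw [e]
      calc G + c*(d₁*sn) ≤ |G| + |c*(d₁*sn)| := add_le_add (le_abs_self _) (le_abs_self _)
        _ ≤ g + 1.01*x := by rw [← hg]; linarith
    have t0 : 1.95*s ≤ s*η*cn := hlp6 hs0.le hη1 hcnl hcnu hη2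
    linarith
  -- feed endgame
  have hc₁ε : 0 ≤ c₁*ε := by positivity
  have hc₂ε : 0 ≤ c₂*ε := by positivity
  have hsl48 : 48*((c₁+c₂+5)*ε) ≤ s := by linarith
  have hAub2 : A ≤ (2*m+2*ε)*(c₁*ε) := le_of_eq (by rw [hA, hm]; ring)
  have q2 : 48*(c₁*ε) ≤ s := by linarith
  have q3 : 12*((2*c₂+8.8)*ε) ≤ s := by linarith
  have q4 : 240*ε ≤ s := by linarith
  rcases le_or_gt g (s/10) with hcase | hcase
  · exact case2 c₁ c₂ ε s x m g hh η A hc₁ hc₂ hε hη1 hg0 hhh0 hs0 hcase h4 h3 h2 hAub2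
      q2 q3 q4 hxm hx0
  · exact case1 c₁ c₂ ε s A g hc₁ hc₂ hε hsl48 hsu hs0 hA0 hAub h1 hcase


set_option maxHeartbeats 1000000

theorem statement15 :
    ∀ c₁ c₂ : ℝ, 0 < c₁ → 0 < c₂ →
    ∃ C C₀ : ℝ, 0 < C ∧ 0 < C₀ ∧
      ∀ δ : ℝ, 0 < δ → δ < 1 / 1000000 →
      ∀ α₁ β₁ α₂ β₂ : ℝ,
        1 ≤ α₁ → α₁ ≤ β₁ → β₁ ≤ 2 → β₁ - α₁ ≤ Real.sqrt δ →
        1 ≤ α₂ → α₂ ≤ β₂ → β₂ ≤ 2 → β₂ - α₂ ≤ Real.sqrt δ →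
      ∀ k k' : ℕ, (k : ℝ) / 2 ≤ Real.pi / 8 * (Real.sqrt δ)⁻¹ - 1 →
        (k' : ℝ) / 2 ≤ Real.pi / 8 * (Real.sqrt δ)⁻¹ - 1 →
      ∀ η₀' ∈ Icc (α₁ - δ) (β₁ + δ), ∀ η₁' ∈ Icc (α₁ - δ) (β₁ + δ),
      ∀ η₀'' ∈ Icc (α₂ - δ) (β₂ + δ), ∀ η₁'' ∈ Icc (α₂ - δ) (β₂ + δ),
        η₀' + η₀'' = η₁' + η₁'' →
      ∀ b : ℝ, C₀ ≤ b → b ≤ Real.pi / 4 * (Real.sqrt δ)⁻¹ - 2 →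
        rect (pPt δ ((k : ℝ) / 2) η₀' η₀'')
            (c₁ * max ((k : ℝ) / 2) (1 / 2) * δ) ((c₂ + 4) * Real.sqrt δ) ∩
          (rot (b * Real.sqrt δ) ''
            rect (pPt δ ((k' : ℝ) / 2) η₁' η₁'')
              (c₁ * max ((k' : ℝ) / 2) (1 / 2) * δ) ((c₂ + 4) * Real.sqrt δ)) = ∅ := by
  intro c₁ c₂ hc₁ hc₂
  refine ⟨1, 100*(c₁+c₂+5), one_pos, by positivity, ?_⟩
  intro δ hδ hδ6 α₁ β₁ α₂ β₂ hα₁ hαβ₁ hβ₁ hJ₁ hα₂ hαβ₂ hβ₂ hJ₂ k k' hk hk'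
    η₀' hη₀' η₁' hη₁' η₀'' hη₀'' η₁'' hη₁'' hsum b hbC hbu
  rw [Set.eq_empty_iff_forall_notMem]
  intro z hz
  obtain ⟨hz1, hz2⟩ := hz
  obtain ⟨w, hw, hwz⟩ := hz2
  set ε := Real.sqrt δ with hεd
  have hε : 0 < ε := Real.sqrt_pos.mpr hδ
  have hε2 : ε*ε = δ := Real.mul_self_sqrt hδ.le
  obtain ⟨hε3, hδε⟩ := hlpSqrt hδ hδ6 hε hε2
  -- ranges of the η's
  obtain ⟨ha0', hb0'⟩ := hη₀'
  obtain ⟨ha1', hb1'⟩ := hη₁'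
  obtain ⟨ha0'', hb0''⟩ := hη₀''
  obtain ⟨ha1'', hb1''⟩ := hη₁''
  set η := η₀' + η₀'' with hηd
  set d₀ := η₀' - η₀'' with hd₀d
  set d₁ := η₁' - η₁'' with hd₁d
  have hδ' : δ ≤ 0.000001 := by linarith
  have hη1 : 1.99 ≤ η := by rw [hηd]; linarith
  have hη2 : η ≤ 4.01 := by rw [hηd]; linarith
  have hd₀ : |d₀| ≤ 1.01 := abs_le.mpr ⟨by rw [hd₀d]; linarith, by rw [hd₀d]; linarith⟩
  have hd₁ : |d₁| ≤ 1.01 := abs_le.mpr ⟨by rw [hd₁d]; linarith, by rw [hd₁d]; linarith⟩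
  have hdd : |d₀ - d₁| ≤ 2.01*ε := by
    rw [hd₀d, hd₁d]
    have h1 : η₀' - η₁' ≤ ε + 2*δ := by linarith
    have h2 : η₁' - η₀' ≤ ε + 2*δ := by linarith
    have h3 : η₀'' - η₁'' ≤ ε + 2*δ := by linarith
    have h4 : η₁'' - η₀'' ≤ ε + 2*δ := by linarith
    rw [abs_le]; constructor <;> linarith
  -- angles
  set θ := (k:ℝ)/2*ε with hθd
  set θ' := (k':ℝ)/2*ε with hθ'd
  have hθ0 : 0 ≤ θ := by rw [hθd]; positivity
  have hθ'0 : 0 ≤ θ' := by rw [hθ'd]; positivity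
  have hinv : (Real.pi/8*ε⁻¹ - 1)*ε = Real.pi/8 - ε := by
    field_simp
  have hθ1 : θ ≤ Real.pi/8 - ε := by
    rw [hθd, ← hinv]
    exact mul_le_mul_of_nonneg_right hk hε.le
  have hθ'1 : θ' ≤ Real.pi/8 - ε := by
    rw [hθ'd, ← hinv]
    exact mul_le_mul_of_nonneg_right hk' hε.le
  set φ := b*ε with hφd
  have hφl : 100*(c₁+c₂+5)*ε ≤ φ := by
    rw [hφd]; exact mul_le_mul_of_nonneg_right hbC hε.le
  have hinv2 : (Real.pi/4*ε⁻¹ - 2)*ε = Real.pi/4 - 2*ε := by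
    field_simp
  have hφu : φ ≤ Real.pi/4 - 2*ε := by
    rw [hφd, ← hinv2]
    exact mul_le_mul_of_nonneg_right hbu hε.le
  -- rectangle bounds
  have hzwre : z.re = Real.cos φ * w.re - Real.sin φ * w.im := by
    rw [← hwz]
    show (Complex.exp (((b*ε : ℝ)) * Complex.I) * w).re = _
    rw [Complex.mul_re, Complex.exp_ofReal_mul_I_re, Complex.exp_ofReal_mul_I_im]
  have hzwim : z.im = Real.sin φ * w.re + Real.cos φ * w.im := by
    rw [← hwz]
    show (Complex.exp (((b*ε : ℝ)) * Complex.I) * w).im = _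
    rw [Complex.mul_im, Complex.exp_ofReal_mul_I_re, Complex.exp_ofReal_mul_I_im]
    ring
  have hrect0 : c₁ * max ((k:ℝ)/2) (1/2) * δ ≤ c₁*(θ+ε)*ε := by
    have hmx : max ((k:ℝ)/2) (1/2) ≤ (k:ℝ)/2 + 1 :=
      max_le (by linarith) (by linarith [Nat.cast_nonneg (α := ℝ) k])
    calc c₁ * max ((k:ℝ)/2) (1/2) * δ ≤ c₁ * ((k:ℝ)/2 + 1) * δ := by
          apply mul_le_mul_of_nonneg_right _ hδ.le
          exact mul_le_mul_of_nonneg_left hmx hc₁.le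
      _ = c₁*(θ+ε)*ε := by rw [hθd, ← hε2]; ring
  have hrect1 : c₁ * max ((k':ℝ)/2) (1/2) * δ ≤ c₁*(θ'+ε)*ε := by
    have hmx : max ((k':ℝ)/2) (1/2) ≤ (k':ℝ)/2 + 1 :=
      max_le (by linarith) (by linarith [Nat.cast_nonneg (α := ℝ) k'])
    calc c₁ * max ((k':ℝ)/2) (1/2) * δ ≤ c₁ * ((k':ℝ)/2 + 1) * δ := by
          apply mul_le_mul_of_nonneg_right _ hδ.le
          exact mul_le_mul_of_nonneg_left hmx hc₁.le
      _ = c₁*(θ'+ε)*ε := by rw [hθ'd, ← hε2]; ring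
  have haz : |z.re - η*Real.cos θ| ≤ c₁*(θ+ε)*ε := le_trans hz1.1 hrect0
  have hbz : |z.im - d₀*Real.sin θ| ≤ (c₂+4)*ε := hz1.2
  have haw : |w.re - η*Real.cos θ'| ≤ c₁*(θ'+ε)*ε := by
    refine le_trans ?_ hrect1
    have := hw.1
    rw [show (pPt δ ((k':ℝ)/2) η₁' η₁'').re = (η₁' + η₁'')*Real.cos θ' from rfl] at this
    rw [show (η₁' + η₁'') = η from by rw [hηd]; exact hsum.symm] at this
    exact this
  have hbw : |w.im - d₁*Real.sin θ'| ≤ (c₂+4)*ε := hw.2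
  -- trig of φ
  set s := Real.sin (φ/2) with hsd
  set c := Real.cos (φ/2) with hcd
  have hpy : s^2 + c^2 = 1 := by rw [hsd, hcd]; exact Real.sin_sq_add_cos_sq _
  have hφ0 : 0 < φ := lt_of_lt_of_le (by positivity) hφl
  have hπu : Real.pi < 3.15 := Real.pi_lt_d2
  have hφπ : φ/2 ≤ Real.pi := by linarith
  have hS0 : 0 ≤ s := by rw [hsd]; exact Real.sin_nonneg_of_nonneg_of_le_pi (by positivity) hφπ
  have hC1 : c ≤ 1 := Real.cos_le_one _
  have hC0 : 0 ≤ c := by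
    rw [hcd]; exact Real.cos_nonneg_of_mem_Icc ⟨by linarith, by linarith⟩
  have hcosφ : Real.cos φ = 2*c^2 - 1 := by
    have e := Real.cos_two_mul (φ/2)
    rw [show 2*(φ/2) = φ from by ring] at e
    rw [hcd]; exact e
  have hsinφ : Real.sin φ = 2*s*c := by
    have e := Real.sin_two_mul (φ/2)
    rw [show 2*(φ/2) = φ from by ring] at e
    rw [hsd, hcd]; exact e
  -- projections
  have hXeq : c*z.re + s*z.im = c*w.re - s*w.im := by
    rw [hzwre, hzwim, hcosφ, hsinφ]
    linear_combination (2*c*w.re)*hpy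
  have hYeq : -s*z.re + c*z.im = s*w.re + c*w.im := by
    rw [hzwre, hzwim, hcosφ, hsinφ]
    linear_combination (2*c*w.im)*hpy
  have hXz : |(c*z.re + s*z.im) - (c*(η*Real.cos θ) + s*(d₀*Real.sin θ))| ≤
      c₁*(θ+ε)*ε + s*((c₂+4)*ε) := by
    have e : (c*z.re + s*z.im) - (c*(η*Real.cos θ) + s*(d₀*Real.sin θ)) =
        c*(z.re - η*Real.cos θ) + s*(z.im - d₀*Real.sin θ) := by ring
    rw [e]
    refine le_trans (abs_add_le _ _) ?_
    rw [abs_mul, abs_mul, abs_of_nonneg hC0, abs_of_nonneg hS0]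
    exact add_le_add (le_trans (mul_le_of_le_one_left (abs_nonneg _) hC1) haz)
      (mul_le_mul_of_nonneg_left hbz hS0)
  have hXw : |(c*w.re - s*w.im) - (c*(η*Real.cos θ') - s*(d₁*Real.sin θ'))| ≤
      c₁*(θ'+ε)*ε + s*((c₂+4)*ε) := by
    have e : (c*w.re - s*w.im) - (c*(η*Real.cos θ') - s*(d₁*Real.sin θ')) =
        c*(w.re - η*Real.cos θ') - s*(w.im - d₁*Real.sin θ') := by ring
    rw [e]
    refine le_trans (abs_sub _ _) ?_
    rw [abs_mul, abs_mul, abs_of_nonneg hC0, abs_of_nonneg hS0]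
    exact add_le_add (le_trans (mul_le_of_le_one_left (abs_nonneg _) hC1) haw)
      (mul_le_mul_of_nonneg_left hbw hS0)
  have hYz : |(-s*z.re + c*z.im) - (-s*(η*Real.cos θ) + c*(d₀*Real.sin θ))| ≤
      s*(c₁*(θ+ε)*ε) + (c₂+4)*ε := by
    have e : (-s*z.re + c*z.im) - (-s*(η*Real.cos θ) + c*(d₀*Real.sin θ)) =
        c*(z.im - d₀*Real.sin θ) - s*(z.re - η*Real.cos θ) := by ring
    rw [e]
    refine le_trans (abs_sub _ _) ?_
    rw [abs_mul, abs_mul, abs_of_nonneg hC0, abs_of_nonneg hS0]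
    have := mul_le_mul_of_nonneg_left haz hS0
    have := le_trans (mul_le_of_le_one_left (abs_nonneg _) hC1) hbz
    linarith
  have hYw : |(s*w.re + c*w.im) - (s*(η*Real.cos θ') + c*(d₁*Real.sin θ'))| ≤
      s*(c₁*(θ'+ε)*ε) + (c₂+4)*ε := by
    have e : (s*w.re + c*w.im) - (s*(η*Real.cos θ') + c*(d₁*Real.sin θ')) =
        c*(w.im - d₁*Real.sin θ') + s*(w.re - η*Real.cos θ') := by ring
    rw [e]
    refine le_trans (abs_add_le _ _) ?_
    rw [abs_mul, abs_mul, abs_of_nonneg hC0, abs_of_nonneg hS0]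
    have := mul_le_mul_of_nonneg_left haw hS0
    have := le_trans (mul_le_of_le_one_left (abs_nonneg _) hC1) hbw
    linarith
  -- combine via triangle inequality
  have hI : |(c*(η*Real.cos θ) + s*(d₀*Real.sin θ)) -
      (c*(η*Real.cos θ') - s*(d₁*Real.sin θ'))| ≤
      (c₁*(θ+ε)*ε + c₁*(θ'+ε)*ε) + 2*(s*((c₂+4)*ε)) := by
    have tri := abs_sub_le (c*(η*Real.cos θ) + s*(d₀*Real.sin θ)) (c*z.re + s*z.im)
      (c*(η*Real.cos θ') - s*(d₁*Real.sin θ'))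
    rw [abs_sub_comm] at hXz
    calc |(c*(η*Real.cos θ) + s*(d₀*Real.sin θ)) -
        (c*(η*Real.cos θ') - s*(d₁*Real.sin θ'))| ≤
        |(c*(η*Real.cos θ) + s*(d₀*Real.sin θ)) - (c*z.re + s*z.im)| +
        |(c*z.re + s*z.im) - (c*(η*Real.cos θ') - s*(d₁*Real.sin θ'))| := tri
      _ ≤ (c₁*(θ+ε)*ε + s*((c₂+4)*ε)) + (c₁*(θ'+ε)*ε + s*((c₂+4)*ε)) := by
          refine add_le_add hXz ?_
          rw [show c*z.re + s*z.im = c*w.re - s*w.im from by rw [hXeq]]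
          exact hXw
      _ = (c₁*(θ+ε)*ε + c₁*(θ'+ε)*ε) + 2*(s*((c₂+4)*ε)) := by ring
  have hII : |(-s*(η*Real.cos θ) + c*(d₀*Real.sin θ)) -
      (s*(η*Real.cos θ') + c*(d₁*Real.sin θ'))| ≤
      (c₁*(θ+ε)*ε + c₁*(θ'+ε)*ε)*s + 2*((c₂+4)*ε) := by
    have tri := abs_sub_le (-s*(η*Real.cos θ) + c*(d₀*Real.sin θ)) (-s*z.re + c*z.im)
      (s*(η*Real.cos θ') + c*(d₁*Real.sin θ'))
    rw [abs_sub_comm] at hYz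
    calc |(-s*(η*Real.cos θ) + c*(d₀*Real.sin θ)) -
        (s*(η*Real.cos θ') + c*(d₁*Real.sin θ'))| ≤
        |(-s*(η*Real.cos θ) + c*(d₀*Real.sin θ)) - (-s*z.re + c*z.im)| +
        |(-s*z.re + c*z.im) - (s*(η*Real.cos θ') + c*(d₁*Real.sin θ'))| := tri
      _ ≤ (s*(c₁*(θ+ε)*ε) + (c₂+4)*ε) + (s*(c₁*(θ'+ε)*ε) + (c₂+4)*ε) := by
          refine add_le_add hYz ?_
          rw [show -s*z.re + c*z.im = s*w.re + c*w.im from hYeq]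
          exact hYw
      _ = (c₁*(θ+ε)*ε + c₁*(θ'+ε)*ε)*s + 2*((c₂+4)*ε) := by ring
  exact core c₁ c₂ ε θ θ' φ η d₀ d₁ hc₁ hc₂ hε hε3 hθ0 hθ1 hθ'0 hθ'1 hφl hφu hη1 hη2
    hd₀ hd₁ hdd hI hII
end

section
/- Let 0 < ε < 1/2, N = ⌊δ^{-ε/2}⌋, δ_ε = δ N². There exists δ_0 > 0, depending only on ε, such that for 0 < δ < δ_0 the following holds: if μ ∈ 𝒩^{(δ)} with μ = ℓN + k for ℓ ∈ 𝒩_*^{(δ_ε)} and integer k with 0 ≤ k ≤ N − 1, then for i = 1, 2, ũ_{μ,J_i} ⊆ (u_{ℓ,J_i}^{(δ_ε)})^*. Moreover (Lemma 4.5), for δ sufficiently small (depending only on ε), every μ ∈ 𝒩^{(δ)} can be written as μ = ℓN + k with ℓ ∈ 𝒩_*^{(δ_ε)} and k ∈ ℤ, 0 ≤ k ≤ N − 1. -/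
open Set Pointwise

noncomputable def GammaStar (δ : ℝ) (μ : ℤ) : Set ℂ :=
  {ξ : ℂ | ξ ≠ 0 ∧ ((μ : ℝ) - 1) * Real.sqrt δ ≤ ξ.arg ∧
      ξ.arg < ((μ : ℝ) + 2) * Real.sqrt δ}

def calNStar (δ : ℝ) : Set ℤ :=
  {μ : ℤ | |(μ : ℝ)| ≤ Real.pi / 7 * (Real.sqrt δ)⁻¹ - 1}

noncomputable def uStar (δ : ℝ) (μ : ℤ) (α β : ℝ) : Set (ℂ × ℝ) :=
  {p : ℂ × ℝ | |p.2 - ‖p.1‖| ≤ 6 * δ ∧ p.1 ∈ GammaStar δ μ ∧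
      ‖p.1‖ ∈ Set.Icc (α - 2 * δ) (β + 2 * δ)}

noncomputable def uTilde (δ ε μ : ℝ) (J : Set ℝ) : Set (ℂ × ℝ) :=
  {p : ℂ × ℝ | ∃ q ∈ uSetD δ μ J,
    Real.sqrt (‖p.1 - q.1‖ ^ 2 + (p.2 - q.2) ^ 2) < δ ^ ((1 : ℝ) - ε)}

lemma arctan_lipschitz : LipschitzWith 1 Real.arctan := by
  apply lipschitzWith_of_nnnorm_deriv_le Real.differentiable_arctan
  intro x
  simp only [Real.deriv_arctan]
  rw [← NNReal.coe_le_coe, coe_nnnorm, NNReal.coe_one, Real.norm_eq_abs,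
    abs_of_pos (by positivity), div_le_one (by positivity)]
  nlinarith [sq_nonneg x]

lemma arg_eq_arctan_of_re_pos {z : ℂ} (hz : 0 < z.re) :
    z.arg = Real.arctan (z.im / z.re) := by
  have h2 : |z.arg| < Real.pi / 2 := Complex.abs_arg_lt_pi_div_two_iff.mpr (Or.inl hz)
  obtain ⟨hl, hr⟩ := abs_lt.mp h2
  rw [← Complex.tan_arg z, Real.arctan_tan (by linarith) hr]

lemma argdiff {z w : ℂ} (hz1 : 1 ≤ ‖z‖) (hz2 : ‖z‖ ≤ 2)
    (hargz : |z.arg| ≤ Real.pi / 8) (hwz : ‖w - z‖ ≤ 1 / 100) :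
    0 < w.re ∧ |w.arg - z.arg| ≤ 5 * ‖w - z‖ := by
  have hπ : Real.pi < 3.15 := Real.pi_lt_d2
  have hπ0 := Real.pi_pos
  have hcos : (9:ℝ)/10 ≤ Real.cos z.arg := by
    have h1 := Real.one_sub_sq_div_two_le_cos (x := z.arg)
    have h2 : z.arg ^ 2 ≤ (Real.pi / 8) ^ 2 := by
      rw [← sq_abs]
      exact pow_le_pow_left₀ (abs_nonneg _) hargz 2
    nlinarith
  have hre : (9:ℝ)/10 ≤ z.re := by
    have h := Complex.norm_mul_cos_arg z
    nlinarith
  have hzre0 : 0 < z.re := by linarith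
  have hred : |w.re - z.re| ≤ ‖w - z‖ := by
    simpa using Complex.abs_re_le_norm (w - z)
  have hdim : |w.im - z.im| ≤ ‖w - z‖ := by
    simpa using Complex.abs_im_le_norm (w - z)
  have hwre : (89:ℝ)/100 ≤ w.re := by
    have := abs_le.mp (hred.trans hwz)
    linarith [this.1]
  have hwre0 : 0 < w.re := by linarith
  have hzim : |z.im| ≤ 2 := (Complex.abs_im_le_norm z).trans hz2
  have hzre2 : z.re ≤ 2 := (Complex.re_le_norm z).trans hz2
  refine ⟨hwre0, ?_⟩
  rw [arg_eq_arctan_of_re_pos hzre0, arg_eq_arctan_of_re_pos hwre0]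
  set t := ‖w - z‖ with ht
  have ht0 : 0 ≤ t := norm_nonneg _
  have hlip : |Real.arctan (w.im / w.re) - Real.arctan (z.im / z.re)| ≤
      |w.im / w.re - z.im / z.re| := by
    have := arctan_lipschitz.dist_le_mul (w.im / w.re) (z.im / z.re)
    simpa [Real.dist_eq] using this
  have hkey : w.im / w.re - z.im / z.re =
      (z.re * (w.im - z.im) - z.im * (w.re - z.re)) / (w.re * z.re) := by
    field_simp
    ring
  have hnum : |z.re * (w.im - z.im) - z.im * (w.re - z.re)| ≤ 4 * t := by
    have h1 : |z.re * (w.im - z.im)| ≤ 2 * t := by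
      rw [abs_mul, abs_of_pos hzre0]
      nlinarith [abs_nonneg (w.im - z.im)]
    have h2 : |z.im * (w.re - z.re)| ≤ 2 * t := by
      rw [abs_mul]
      nlinarith [abs_nonneg (w.re - z.re), abs_nonneg z.im]
    calc |z.re * (w.im - z.im) - z.im * (w.re - z.re)|
        ≤ |z.re * (w.im - z.im)| + |z.im * (w.re - z.re)| := abs_sub _ _
      _ ≤ 4 * t := by linarith
  have hden : (4:ℝ)/5 ≤ |w.re * z.re| := by
    rw [abs_of_pos (mul_pos hwre0 hzre0)]
    nlinarith
  have hdiff : |w.im / w.re - z.im / z.re| ≤ 5 * t := by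
    rw [hkey, abs_div]
    calc |z.re * (w.im - z.im) - z.im * (w.re - z.re)| / |w.re * z.re|
        ≤ (4 * t) / (4/5) := div_le_div₀ (by positivity) hnum (by norm_num) hden
      _ = 5 * t := by ring
  linarith

set_option maxHeartbeats 1000000 in
lemma main_subset (δ ε : ℝ) (ℓ k μ : ℤ) (Nr α β : ℝ)
    (hδ : 0 < δ) (hα : 1 ≤ α) (hβ : β ≤ 2)
    (hμb : |(μ : ℝ)| ≤ Real.pi / 8 * (Real.sqrt δ)⁻¹ - 1)
    (hNr1 : 1 ≤ Nr)
    (hμr : (μ : ℝ) = (ℓ : ℝ) * Nr + (k : ℝ))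
    (hk0 : (0:ℝ) ≤ (k : ℝ)) (hk1 : (k : ℝ) ≤ Nr - 1)
    (hδler : δ ≤ δ ^ ((1:ℝ) - ε))
    (hrD : δ ^ ((1:ℝ) - ε) ≤ 2 * (δ * Nr ^ 2))
    (h5r : 5 * δ ^ ((1:ℝ) - ε) ≤ Real.sqrt (δ * Nr ^ 2))
    (hr100 : δ ^ ((1:ℝ) - ε) ≤ 1/100)
    (hSeq : Real.sqrt (δ * Nr ^ 2) = Real.sqrt δ * Nr) :
    uTilde δ ε (μ : ℝ) (Icc α β) ⊆ uStar (δ * Nr ^ 2) ℓ α β := by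
  have hs : 0 < Real.sqrt δ := Real.sqrt_pos.mpr hδ
  have hrpos : 0 < δ ^ ((1:ℝ) - ε) := Real.rpow_pos_of_pos hδ _
  have hSpos : 0 < Real.sqrt (δ * Nr ^ 2) := by
    rw [hSeq]; positivity
  have hμs : (|(μ:ℝ)| + 1) * Real.sqrt δ ≤ Real.pi / 8 := by
    have h := mul_le_mul_of_nonneg_right
      (show |(μ:ℝ)| + 1 ≤ Real.pi/8 * (Real.sqrt δ)⁻¹ by linarith) hs.le
    rwa [mul_assoc, inv_mul_cancel₀ hs.ne', mul_one] at h
  intro p hp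
  obtain ⟨q, ⟨hq1, ⟨hq0, hqa1, hqa2⟩, hqJ⟩, hpq⟩ := hp
  have hqJ1 : α ≤ ‖q.1‖ := hqJ.1
  have hqJ2 : ‖q.1‖ ≤ β := hqJ.2
  have hd1 : ‖p.1 - q.1‖ < δ ^ ((1:ℝ) - ε) := by
    have hx := Real.sqrt_le_sqrt (show ‖p.1 - q.1‖ ^ 2 ≤
        ‖p.1 - q.1‖ ^ 2 + (p.2 - q.2) ^ 2 by nlinarith [sq_nonneg (p.2 - q.2)])
    rw [Real.sqrt_sq (norm_nonneg (p.1 - q.1))] at hx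
    linarith [hpq]
  have hd2 : |p.2 - q.2| < δ ^ ((1:ℝ) - ε) := by
    have hx := Real.sqrt_le_sqrt (show (p.2 - q.2) ^ 2 ≤
        ‖p.1 - q.1‖ ^ 2 + (p.2 - q.2) ^ 2 by
          nlinarith [sq_nonneg (‖p.1 - q.1‖)])
    rw [Real.sqrt_sq_eq_abs] at hx
    linarith [hpq]
  have hE : |‖p.1‖ - ‖q.1‖| ≤ ‖p.1 - q.1‖ :=
    abs_norm_sub_norm_le p.1 q.1
  obtain ⟨hE1, hE2⟩ := abs_le.mp hE
  have hprod1 : 0 ≤ ((μ:ℝ) + |(μ:ℝ)|) * Real.sqrt δ :=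
    mul_nonneg (by linarith [neg_abs_le (μ:ℝ)]) hs.le
  have hprod2 : 0 ≤ (|(μ:ℝ)| - (μ:ℝ)) * Real.sqrt δ :=
    mul_nonneg (by linarith [le_abs_self (μ:ℝ)]) hs.le
  have hargq : |q.1.arg| ≤ Real.pi / 8 := by
    rw [abs_le]
    constructor
    · nlinarith [hμs, hqa1, hprod1, hs.le]
    · nlinarith [hμs, hqa2, hprod2, hs.le]
  rw [hμr] at hqa1 hqa2
  have harglo : (ℓ:ℝ) * Real.sqrt (δ * Nr ^ 2) ≤ q.1.arg := by
    rw [hSeq]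
    nlinarith [hqa1, mul_nonneg hk0 hs.le]
  have harghi : q.1.arg < ((ℓ:ℝ) + 1) * Real.sqrt (δ * Nr ^ 2) := by
    rw [hSeq]
    nlinarith [hqa2, mul_nonneg (show (0:ℝ) ≤ Nr - 1 - (k:ℝ) by linarith) hs.le]
  have hargd := argdiff (z := q.1) (w := p.1) (by linarith) (by linarith) hargq
    (by linarith)
  obtain ⟨hpre, hargd2⟩ := hargd
  have hp0 : p.1 ≠ 0 := by
    intro h
    rw [h] at hpre
    simp at hpre
  have hargdr : |p.1.arg - q.1.arg| ≤ Real.sqrt (δ * Nr ^ 2) := by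
    calc |p.1.arg - q.1.arg| ≤ 5 * ‖p.1 - q.1‖ := hargd2
      _ ≤ 5 * δ ^ ((1:ℝ) - ε) := by linarith
      _ ≤ Real.sqrt (δ * Nr ^ 2) := h5r
  obtain ⟨hargd3, hargd4⟩ := abs_le.mp hargdr
  refine ⟨?_, ⟨hp0, by linarith, by linarith⟩, by linarith, by linarith⟩
  have t1 := abs_sub_le p.2 q.2 (‖p.1‖)
  have t2 := abs_sub_le q.2 (‖q.1‖) (‖p.1‖)
  have t3 : |‖q.1‖ - ‖p.1‖| ≤ ‖p.1 - q.1‖ := by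
    rw [abs_sub_comm]; exact hE
  have t4 : |p.2 - ‖p.1‖| ≤ |p.2 - q.2| + |q.2 - ‖q.1‖|
      + |‖q.1‖ - ‖p.1‖| := by linarith
  linarith [t4, hq1, hd1, hd2, t3, hδler, hrD]

lemma part2_aux (δ : ℝ) (Nz μ : ℤ) (hδ : 0 < δ) (hNz : 1 ≤ Nz)
    (hSle : Real.sqrt (δ * ((Nz:ℝ)) ^ 2) ≤ Real.pi / 112)
    (hSeq : Real.sqrt (δ * ((Nz:ℝ)) ^ 2) = Real.sqrt δ * (Nz:ℝ))
    (hμ : |(μ : ℝ)| ≤ Real.pi / 8 * (Real.sqrt δ)⁻¹ - 1) :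
    ∃ ℓ k : ℤ, ℓ ∈ calNStar (δ * ((Nz:ℝ)) ^ 2) ∧ 0 ≤ k ∧ k ≤ Nz - 1 ∧
      μ = ℓ * Nz + k := by
  have hs : 0 < Real.sqrt δ := Real.sqrt_pos.mpr hδ
  have hNz0 : Nz ≠ 0 := by omega
  have hNr0 : (0:ℝ) < (Nz:ℝ) := by exact_mod_cast (by omega : (0:ℤ) < Nz)
  have hSpos : 0 < Real.sqrt (δ * ((Nz:ℝ)) ^ 2) := by rw [hSeq]; positivity
  set ℓ : ℤ := μ / Nz with hℓ
  set k : ℤ := μ % Nz with hk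
  have heq : μ = ℓ * Nz + k := by
    rw [hℓ, hk, mul_comm]; exact (Int.mul_ediv_add_emod μ Nz).symm
  have hk0 : 0 ≤ k := Int.emod_nonneg μ hNz0
  have hk1 : k < Nz := Int.emod_lt_of_pos μ (by omega)
  refine ⟨ℓ, k, ?_, hk0, by omega, heq⟩
  simp only [calNStar, Set.mem_setOf_eq]
  have hk0r : (0:ℝ) ≤ (k:ℝ) := by exact_mod_cast hk0
  have hk1r : (k:ℝ) ≤ (Nz:ℝ) - 1 := by
    have : (k:ℝ) ≤ ((Nz - 1 : ℤ) : ℝ) := by exact_mod_cast (by omega : k ≤ Nz - 1)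
    push_cast at this
    linarith
  have hμr : (ℓ:ℝ) * (Nz:ℝ) = (μ:ℝ) - (k:ℝ) := by
    rw [heq]; push_cast; ring
  have habs : |(ℓ:ℝ)| * (Nz:ℝ) ≤ |(μ:ℝ)| + ((Nz:ℝ) - 1) := by
    have h1 : |(ℓ:ℝ) * (Nz:ℝ)| = |(ℓ:ℝ)| * (Nz:ℝ) := by
      rw [abs_mul, abs_of_pos hNr0]
    rw [← h1, hμr]
    calc |(μ:ℝ) - (k:ℝ)| ≤ |(μ:ℝ)| + |(k:ℝ)| := abs_sub _ _
      _ ≤ |(μ:ℝ)| + ((Nz:ℝ) - 1) := by rw [abs_of_nonneg hk0r]; linarith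
  have hμs : |(μ:ℝ)| * Real.sqrt δ ≤ Real.pi / 8 - Real.sqrt δ := by
    have h := mul_le_mul_of_nonneg_right hμ hs.le
    rw [sub_mul, mul_assoc, inv_mul_cancel₀ hs.ne', mul_one, one_mul] at h
    linarith
  have hstep : (|(ℓ:ℝ)| + 1) * Real.sqrt (δ * ((Nz:ℝ)) ^ 2) ≤ Real.pi / 7 := by
    have h1 : |(ℓ:ℝ)| * Real.sqrt (δ * ((Nz:ℝ)) ^ 2) ≤
        (|(μ:ℝ)| + ((Nz:ℝ) - 1)) * Real.sqrt δ := by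
      rw [hSeq]
      nlinarith [habs, hs.le, abs_nonneg (ℓ:ℝ)]
    have h2 : (|(μ:ℝ)| + ((Nz:ℝ) - 1)) * Real.sqrt δ =
        |(μ:ℝ)| * Real.sqrt δ + Real.sqrt (δ * ((Nz:ℝ)) ^ 2) - Real.sqrt δ := by
      rw [hSeq]; ring
    nlinarith [hμs, hSle, hs, hSpos, h1, h2]
  have hfin : |(ℓ:ℝ)| + 1 ≤ Real.pi / 7 / Real.sqrt (δ * ((Nz:ℝ)) ^ 2) :=
    (le_div_iff₀ hSpos).mpr hstep
  rw [div_eq_mul_inv] at hfin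
  linarith

set_option maxHeartbeats 1000000 in
theorem statement19 :
    ∀ ε : ℝ, 0 < ε → ε < 1 / 2 →
    ∃ δ₀ : ℝ, 0 < δ₀ ∧
      ∀ δ : ℝ, 0 < δ → δ < 1 / 1000000 → δ < δ₀ →
      ∀ α₁ β₁ α₂ β₂ : ℝ,
        1 ≤ α₁ → α₁ ≤ β₁ → β₁ ≤ 2 → β₁ - α₁ ≤ Real.sqrt δ →
        1 ≤ α₂ → α₂ ≤ β₂ → β₂ ≤ 2 → β₂ - α₂ ≤ Real.sqrt δ →
        ((∀ μ ℓ k : ℤ, μ ∈ calND δ →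
            ℓ ∈ calNStar (δ * (⌊δ ^ (-(ε / 2))⌋ : ℝ) ^ 2) →
            0 ≤ k → k ≤ ⌊δ ^ (-(ε / 2))⌋ - 1 → μ = ℓ * ⌊δ ^ (-(ε / 2))⌋ + k →
            uTilde δ ε (μ : ℝ) (Icc α₁ β₁)
              ⊆ uStar (δ * (⌊δ ^ (-(ε / 2))⌋ : ℝ) ^ 2) ℓ α₁ β₁ ∧
            uTilde δ ε (μ : ℝ) (Icc α₂ β₂)
              ⊆ uStar (δ * (⌊δ ^ (-(ε / 2))⌋ : ℝ) ^ 2) ℓ α₂ β₂) ∧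
         (∀ μ : ℤ, μ ∈ calND δ →
            ∃ ℓ k : ℤ, ℓ ∈ calNStar (δ * (⌊δ ^ (-(ε / 2))⌋ : ℝ) ^ 2) ∧
              0 ≤ k ∧ k ≤ ⌊δ ^ (-(ε / 2))⌋ - 1 ∧
              μ = ℓ * ⌊δ ^ (-(ε / 2))⌋ + k)) := by
  intro ε hε hε2
  refine ⟨min ((1/4 : ℝ) ^ ((2:ℝ)/ε)) (1/100000000),
    lt_min (Real.rpow_pos_of_pos (by norm_num) _) (by norm_num), ?_⟩
  intro δ hδ hδ6 hδ0 α₁ β₁ α₂ β₂ hα₁ hαβ₁ hβ₁ hJ₁ hα₂ hαβ₂ hβ₂ hJ₂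
  have hπ : Real.pi < 3.15 := Real.pi_lt_d2
  have hπ3 : (3:ℝ) < Real.pi := Real.pi_gt_three
  have hδ1 : δ < 1 := by linarith
  have hδ8 : δ ≤ 1/100000000 := le_of_lt (lt_of_lt_of_le hδ0 (min_le_right _ _))
  have hs : 0 < Real.sqrt δ := Real.sqrt_pos.mpr hδ
  have hδe : δ ^ (ε/2) ≤ 1/4 := by
    have h1 : δ ≤ (1/4:ℝ) ^ ((2:ℝ)/ε) := le_of_lt (lt_of_lt_of_le hδ0 (min_le_left _ _))
    have h2 : δ ^ (ε/2) ≤ ((1/4:ℝ) ^ ((2:ℝ)/ε)) ^ (ε/2) :=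
      Real.rpow_le_rpow hδ.le h1 (by positivity)
    have h3 : ((1/4:ℝ) ^ ((2:ℝ)/ε)) ^ (ε/2) = 1/4 := by
      rw [← Real.rpow_mul (by norm_num)]
      rw [show (2:ℝ)/ε * (ε/2) = 1 by field_simp]
      exact Real.rpow_one _
    linarith
  have hXpos : 0 < δ ^ (-(ε/2)) := Real.rpow_pos_of_pos hδ _
  have hX1 : (1:ℝ) < δ ^ (-(ε/2)) :=
    Real.one_lt_rpow_of_pos_of_lt_one_of_neg hδ hδ1 (by linarith)
  have hNpos : 1 ≤ ⌊δ ^ (-(ε/2))⌋ := Int.le_floor.mpr (by exact_mod_cast hX1.le)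
  have hNr1 : (1:ℝ) ≤ ((⌊δ ^ (-(ε/2))⌋ : ℤ) : ℝ) := by exact_mod_cast hNpos
  have hNr0 : (0:ℝ) < ((⌊δ ^ (-(ε/2))⌋ : ℤ) : ℝ) := by linarith
  have hNle : ((⌊δ ^ (-(ε/2))⌋ : ℤ) : ℝ) ≤ δ ^ (-(ε/2)) := Int.floor_le _
  have hmul : δ ^ (-(ε/2)) * δ ^ (ε/2) = 1 := by
    rw [← Real.rpow_add hδ]; simp
  have hNge : (3/4) * δ ^ (-(ε/2)) ≤ ((⌊δ ^ (-(ε/2))⌋ : ℤ) : ℝ) := by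
    have h1 : δ ^ (-(ε/2)) - 1 ≤ ((⌊δ ^ (-(ε/2))⌋ : ℤ) : ℝ) := (Int.sub_one_lt_floor _).le
    nlinarith [hXpos, hδe, hmul]
  have hDpos : 0 < δ * ((⌊δ ^ (-(ε/2))⌋ : ℤ) : ℝ) ^ 2 := mul_pos hδ (pow_pos hNr0 2)
  have hSeq : Real.sqrt (δ * ((⌊δ ^ (-(ε/2))⌋ : ℤ) : ℝ) ^ 2) =
      Real.sqrt δ * ((⌊δ ^ (-(ε/2))⌋ : ℤ) : ℝ) := by
    rw [Real.sqrt_mul hδ.le, Real.sqrt_sq hNr0.le]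
  have hSpos : 0 < Real.sqrt (δ * ((⌊δ ^ (-(ε/2))⌋ : ℤ) : ℝ) ^ 2) :=
    Real.sqrt_pos.mpr hDpos
  have hrpos : 0 < δ ^ ((1:ℝ) - ε) := Real.rpow_pos_of_pos hδ _
  have hXsq : (δ ^ (-(ε/2)))^2 = δ ^ (-ε) := by
    rw [← Real.rpow_natCast (δ ^ (-(ε/2))) 2, ← Real.rpow_mul hδ.le]
    norm_num
  have hδr : δ ^ ((1:ℝ) - ε) = δ * δ ^ (-ε) := by
    rw [show (1:ℝ) - ε = 1 + (-ε) by ring, Real.rpow_add hδ, Real.rpow_one]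
  have hrD : δ ^ ((1:ℝ) - ε) ≤ 2 * (δ * ((⌊δ ^ (-(ε/2))⌋ : ℤ) : ℝ) ^ 2) := by
    have h1 : (3/4 * δ ^ (-(ε/2)))^2 ≤ ((⌊δ ^ (-(ε/2))⌋ : ℤ) : ℝ)^2 :=
      pow_le_pow_left₀ (by positivity) hNge 2
    rw [mul_pow, hXsq] at h1
    nlinarith [hδ, h1, hδr]
  have hδler : δ ≤ δ ^ ((1:ℝ) - ε) := by
    have := Real.rpow_le_rpow_of_exponent_ge hδ hδ1.le (show (1:ℝ) - ε ≤ 1 by linarith)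
    rwa [Real.rpow_one] at this
  have hypos : 0 < δ ^ (((1:ℝ) - ε)/2) := Real.rpow_pos_of_pos hδ _
  have hy100 : δ ^ (((1:ℝ) - ε)/2) ≤ 1/100 := by
    have h1 : δ ^ (((1:ℝ)-ε)/2) ≤ δ ^ ((1:ℝ)/4) :=
      Real.rpow_le_rpow_of_exponent_ge hδ hδ1.le (by linarith)
    have h2 : δ ^ ((1:ℝ)/4) ≤ (1/100000000:ℝ) ^ ((1:ℝ)/4) :=
      Real.rpow_le_rpow hδ.le hδ8 (by norm_num)
    have h3 : (1/100000000:ℝ) ^ ((1:ℝ)/4) = 1/100 := by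
      rw [show (1/100000000:ℝ) = (1/100:ℝ)^(4:ℕ) by norm_num,
        ← Real.rpow_natCast ((1/100:ℝ)) 4, ← Real.rpow_mul (by norm_num)]
      norm_num
    linarith
  have hry : δ ^ ((1:ℝ) - ε) = (δ ^ (((1:ℝ) - ε)/2))^2 := by
    rw [← Real.rpow_natCast (δ ^ (((1:ℝ)-ε)/2)) 2, ← Real.rpow_mul hδ.le]
    norm_num
  have hsX : Real.sqrt δ * δ ^ (-(ε/2)) = δ ^ (((1:ℝ) - ε)/2) := by
    rw [Real.sqrt_eq_rpow, ← Real.rpow_add hδ]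
    congr 1
    ring
  have hSy : 3/4 * δ ^ (((1:ℝ) - ε)/2) ≤
      Real.sqrt (δ * ((⌊δ ^ (-(ε/2))⌋ : ℤ) : ℝ) ^ 2) := by
    have h1 : Real.sqrt δ * ((3/4) * δ^(-(ε/2))) ≤
        Real.sqrt δ * ((⌊δ ^ (-(ε/2))⌋ : ℤ) : ℝ) := mul_le_mul_of_nonneg_left hNge hs.le
    have h2 : Real.sqrt δ * ((3/4) * δ^(-(ε/2))) = 3/4 * δ ^ (((1:ℝ) - ε)/2) := by
      rw [← hsX]; ring
    rw [hSeq]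
    linarith
  have h5r : 5 * δ ^ ((1:ℝ) - ε) ≤
      Real.sqrt (δ * ((⌊δ ^ (-(ε/2))⌋ : ℤ) : ℝ) ^ 2) := by
    nlinarith [hy100, hSy, hypos, hry]
  have hr100 : δ ^ ((1:ℝ) - ε) ≤ 1/100 := by nlinarith [hy100, hypos, hry]
  have hSley : Real.sqrt (δ * ((⌊δ ^ (-(ε/2))⌋ : ℤ) : ℝ) ^ 2) ≤ δ ^ (((1:ℝ) - ε)/2) := by
    have h1 : Real.sqrt δ * ((⌊δ ^ (-(ε/2))⌋ : ℤ) : ℝ) ≤ Real.sqrt δ * δ ^ (-(ε/2)) :=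
      mul_le_mul_of_nonneg_left hNle hs.le
    rw [hSeq, ← hsX]
    linarith
  have hSle : Real.sqrt (δ * ((⌊δ ^ (-(ε/2))⌋ : ℤ) : ℝ) ^ 2) ≤ Real.pi / 112 := by
    calc Real.sqrt (δ * ((⌊δ ^ (-(ε/2))⌋ : ℤ) : ℝ) ^ 2) ≤ δ ^ (((1:ℝ) - ε)/2) := hSley
      _ ≤ 1/100 := hy100
      _ ≤ Real.pi / 112 := by linarith
  constructor
  · intro μ ℓ k hμ hℓ hk0 hk1 heq
    simp only [calND, Set.mem_setOf_eq] at hμ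
    have hk0r : (0:ℝ) ≤ (k:ℝ) := by exact_mod_cast hk0
    have hk1r : (k:ℝ) ≤ ((⌊δ ^ (-(ε/2))⌋ : ℤ) : ℝ) - 1 := by
      have : (k:ℝ) ≤ ((⌊δ ^ (-(ε/2))⌋ - 1 : ℤ) : ℝ) := by exact_mod_cast hk1
      push_cast at this
      linarith
    have hμr : (μ:ℝ) = (ℓ:ℝ) * ((⌊δ ^ (-(ε/2))⌋ : ℤ) : ℝ) + (k:ℝ) := by
      rw [heq]; push_cast; ring
    exact ⟨main_subset δ ε ℓ k μ _ α₁ β₁ hδ hα₁ hβ₁ hμ hNr1 hμr hk0r hk1r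
        hδler hrD h5r hr100 hSeq,
      main_subset δ ε ℓ k μ _ α₂ β₂ hδ hα₂ hβ₂ hμ hNr1 hμr hk0r hk1r
        hδler hrD h5r hr100 hSeq⟩
  · intro μ hμ
    simp only [calND, Set.mem_setOf_eq] at hμ
    exact part2_aux δ ⌊δ ^ (-(ε/2))⌋ μ hδ hNpos hSle hSeq hμ
end
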